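/- Let Θ be an MLL proof structure such that Algorithm A with input Θ outputs yes. Then the directed graph G(S_∀ℓ(Θ)) is acyclic: if G(S_∀ℓ(Θ)) had a directed cycle, the rewriting system could not reduce T(Θ) to a one-node tree because the ⅋-elimination rule could never be applied to any of the ⅋-links contained in the cycle. -/

import Mathlib

/-! ## MLL formulas, links, proof structures, proof nets, DR-switchings -/

abbrev Occ := ℕ

/-- MLL formulas over the single atom `p`. -/
inductive MLLFormula : Type
  | pos : MLLFormula
  | neg : MLLFormula
  | tensor : MLLFormula → MLLFormula → MLLFormula
  | par : MLLFormula → MLLFormula → MLLFormula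
deriving DecidableEq

/-- MLL links, given by their occurrences. -/
inductive MLLLink : Type
  | id (c1 c2 : Occ) : MLLLink
  | tensor (l r c : Occ) : MLLLink
  | par (l r c : Occ) : MLLLink
deriving DecidableEq

def MLLLink.prems : MLLLink → List Occ
  | .id _ _ => []
  | .tensor l r _ => [l, r]
  | .par l r _ => [l, r]

def MLLLink.concs : MLLLink → List Occ
  | .id c1 c2 => [c1, c2]
  | .tensor _ _ c => [c]
  | .par _ _ c => [c]

def MLLLink.IsPar : MLLLink → Prop
  | .par _ _ _ => True
  | _ => False

/-- An MLL proof structure: a finite set of links over formula occurrences. -/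
structure ProofStructure where
  links : Finset MLLLink
  form : Occ → MLLFormula
  nodupLink : ∀ L ∈ links, (MLLLink.concs L ++ MLLLink.prems L).Nodup
  formOk : ∀ L ∈ links,
    (∀ c1 c2, L = MLLLink.id c1 c2 → form c1 = MLLFormula.pos ∧ form c2 = MLLFormula.neg) ∧
    (∀ l r c, L = MLLLink.tensor l r c → form c = MLLFormula.tensor (form l) (form r)) ∧
    (∀ l r c, L = MLLLink.par l r c → form c = MLLFormula.par (form l) (form r))
  concUnique : ∀ L1 ∈ links, ∀ L2 ∈ links, ∀ x,
    x ∈ MLLLink.concs L1 → x ∈ MLLLink.concs L2 → L1 = L2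
  premUnique : ∀ L1 ∈ links, ∀ L2 ∈ links, ∀ x,
    x ∈ MLLLink.prems L1 → x ∈ MLLLink.prems L2 → L1 = L2
  premIsConc : ∀ L ∈ links, ∀ x ∈ MLLLink.prems L, ∃ K ∈ links, K ≠ L ∧ x ∈ MLLLink.concs K

/-- The set of occurrences of a set of links. -/
def occsOf (S : Finset MLLLink) : Set Occ :=
  {x | ∃ L ∈ S, x ∈ MLLLink.concs L ∨ x ∈ MLLLink.prems L}

/-- `x` is a conclusion of the set of links `S`, i.e. a conclusion of some link of `S`
that is not a premise of any link of `S`. -/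
def IsConcOfSet (S : Finset MLLLink) (x : Occ) : Prop :=
  (∃ L ∈ S, x ∈ MLLLink.concs L) ∧ ∀ L ∈ S, x ∉ MLLLink.prems L

/-- Sequentializability: the inductive construction of MLL proof nets, mirroring
the ID, ⊗ and ⅋ rules of the MLL sequent calculus. -/
inductive Sequentializable (form : Occ → MLLFormula) : Finset MLLLink → Prop
  | id (c1 c2 : Occ) : c1 ≠ c2 → form c1 = MLLFormula.pos → form c2 = MLLFormula.neg →
      Sequentializable form {MLLLink.id c1 c2}
  | tensor (S1 S2 : Finset MLLLink) (l r c : Occ) :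
      Sequentializable form S1 → Sequentializable form S2 →
      (∀ x, x ∈ occsOf S1 → x ∉ occsOf S2) →
      IsConcOfSet S1 l → IsConcOfSet S2 r →
      c ∉ occsOf S1 → c ∉ occsOf S2 →
      form c = MLLFormula.tensor (form l) (form r) →
      Sequentializable form (insert (MLLLink.tensor l r c) (S1 ∪ S2))
  | par (S : Finset MLLLink) (l r c : Occ) :
      Sequentializable form S →
      l ≠ r → IsConcOfSet S l → IsConcOfSet S r →
      c ∉ occsOf S →
      form c = MLLFormula.par (form l) (form r) →
      Sequentializable form (insert (MLLLink.par l r c) S)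

/-- An MLL proof net is a sequentializable MLL proof structure. -/
def ProofStructure.IsProofNet (Θ : ProofStructure) : Prop :=
  Sequentializable Θ.form Θ.links

/-- The edges contributed by a link under a DR-switching `sw`
(`sw L = false` selects the left premise of a ⅋-link, `true` the right one). -/
def drStep (sw : MLLLink → Bool) (L : MLLLink) (x y : Occ) : Prop :=
  match L with
  | .id c1 c2 => x = c1 ∧ y = c2
  | .tensor l r c => (x = l ∧ y = c) ∨ (x = r ∧ y = c)
  | .par l r c => if sw (MLLLink.par l r c) = true then x = r ∧ y = c else x = l ∧ y = c

/-- The DR-graph of a proof structure under a DR-switching. -/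
def DRGraph (Θ : ProofStructure) (sw : MLLLink → Bool) : SimpleGraph Occ where
  Adj x y := x ≠ y ∧ ∃ L ∈ Θ.links, drStep sw L x y ∨ drStep sw L y x
  symm := by
    constructor
    rintro x y ⟨hxy, L, hL, h⟩
    exact ⟨hxy.symm, L, hL, h.symm⟩
  loopless := by constructor; rintro x ⟨hxx, _⟩; exact hxx rfl

def ProofStructure.occSet (Θ : ProofStructure) : Set Occ := occsOf Θ.links

/-- The extreme left DR-switching `S_∀ℓ`. -/
def extremeLeft : MLLLink → Bool := fun _ => false

/-- The extreme left DR-graph `S_∀ℓ(Θ)`. -/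
def DRGraphL (Θ : ProofStructure) : SimpleGraph Occ := DRGraph Θ extremeLeft

/-- `S_∀ℓ(Θ)` is a tree (on the vertex set of occurrences of `Θ`). -/
def DRTreeL (Θ : ProofStructure) : Prop :=
  ((DRGraphL Θ).induce Θ.occSet).IsTree

/-- Consistency of a ⅋-link with premises `l`, `r` and conclusion `c`:
the unique path in the tree `S_∀ℓ(Θ)` from `l` to `r` does not contain `c`. -/
def ParLinkConsistent (Θ : ProofStructure) (l r c : Occ) : Prop :=
  ∀ p : (DRGraphL Θ).Walk l r, p.IsPath → c ∉ p.support

/-- Every ⅋-link of `Θ` is consistent in `S_∀ℓ(Θ)`. -/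
def AllParConsistent (Θ : ProofStructure) : Prop :=
  ∀ l r c, MLLLink.par l r c ∈ Θ.links → ParLinkConsistent Θ l r c

/-- The edge relation of the directed graph `G(S_∀ℓ(Θ))` on ⅋-links:
`(L1, L2)` is an edge when the unique path in `S_∀ℓ(Θ)` between the premises of `L2`
contains the node of `L1`. -/
def deNMRel (Θ : ProofStructure) (L1 L2 : MLLLink) : Prop :=
  L1 ∈ Θ.links ∧ L2 ∈ Θ.links ∧ L1 ≠ L2 ∧
  ∃ l1 r1 c1, L1 = MLLLink.par l1 r1 c1 ∧
  ∃ l2 r2 c2, L2 = MLLLink.par l2 r2 c2 ∧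
  ∃ p : (DRGraphL Θ).Walk l2 r2, p.IsPath ∧ c1 ∈ p.support

/-- Acyclicity of a directed graph given by a relation. -/
def DirAcyclicRel {α : Type} (R : α → α → Prop) : Prop :=
  ∀ x, ¬ Relation.TransGen R x x

/-- `x` is the left premise of the ⅋-link `P` of `Θ`. -/
def leftPremOfPar (Θ : ProofStructure) (x : Occ) (P : MLLLink) : Prop :=
  P ∈ Θ.links ∧ ∃ r c, P = MLLLink.par x r c

/-- `x` is the right premise of the ⅋-link `P` of `Θ`. -/
def rightPremOfPar (Θ : ProofStructure) (x : Occ) (P : MLLLink) : Prop :=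
  P ∈ Θ.links ∧ ∃ l c, P = MLLLink.par l x c

/-- `x` is a premise of some ⅋-link of `Θ`. -/
def premOfParLink (Θ : ProofStructure) (x : Occ) : Prop :=
  ∃ P, leftPremOfPar Θ x P ∨ rightPremOfPar Θ x P

/-- `x` is a conclusion of the proof structure `Θ`. -/
def IsConcOfTheta (Θ : ProofStructure) (x : Occ) : Prop :=
  IsConcOfSet Θ.links x

/-! ## deNM-trees, the translation T(Θ), the rewriting system, and Algorithm A -/

/-- Labels `ℓ_L` and `r_L` for ⅋-links `L`. -/
inductive DLabel : Type
  | left (L : MLLLink) : DLabel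
  | right (L : MLLLink) : DLabel
deriving DecidableEq

/-- A node of a deNM-tree is either a labeled node carrying a finite label set,
or a ⅋-node labeled by a ⅋-link. -/
inductive DNodeKind : Type
  | labeled (s : Finset DLabel) : DNodeKind
  | par (L : MLLLink) : DNodeKind

/-- The raw data of a deNM-tree: a finite vertex set, a node-kind assignment,
a finite edge set, and for each ⅋-node the neighbour attached at its upper port. -/
structure PreTree where
  V : Finset ℕ
  kind : ℕ → DNodeKind
  edges : Finset (Sym2 ℕ)
  upper : ℕ → Option ℕ

/-- The underlying undirected graph of a deNM-tree. -/
def PreTree.graph (T : PreTree) : SimpleGraph ℕ where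
  Adj x y := x ≠ y ∧ s(x, y) ∈ T.edges
  symm := by
    constructor
    rintro x y ⟨hxy, he⟩
    exact ⟨hxy.symm, by rwa [Sym2.eq_swap]⟩
  loopless := by constructor; rintro x ⟨hxx, _⟩; exact hxx rfl

/-- The degree of a vertex. -/
def PreTree.degree (T : PreTree) (v : ℕ) : ℕ :=
  (T.edges.filter (fun e => v ∈ e)).card

/-- `n` is a labeled node of `T`. -/
def PreTree.IsLabeledVertex (T : PreTree) (n : ℕ) : Prop :=
  n ∈ T.V ∧ ∃ s, T.kind n = DNodeKind.labeled s

/-- `T` is a deNM-tree: a finite tree whose ⅋-nodes have degree 1 or 2 and have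
their upper port attached to a neighbour. -/
def PreTree.IsDeNMTree (T : PreTree) : Prop :=
  (∀ e ∈ T.edges, ∀ x ∈ e, x ∈ T.V) ∧
  (∀ e ∈ T.edges, ¬ e.IsDiag) ∧
  (T.graph.induce (↑T.V : Set ℕ)).IsTree ∧
  ∀ v ∈ T.V, ∀ L, T.kind v = DNodeKind.par L →
    (∃ u ∈ T.V, T.upper v = some u ∧ s(v, u) ∈ T.edges) ∧
    1 ≤ T.degree v ∧ T.degree v ≤ 2

/-- ⅋-consistency of a deNM-tree: for every ⅋-node `v` (for the ⅋-link `L`),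
the unique path between its upper-port neighbour (the left premise position)
and any labeled node carrying `r_L` (the right premise position) avoids `v`. -/
def PreTree.ParConsistentD (T : PreTree) : Prop :=
  ∀ v ∈ T.V, ∀ L, T.kind v = DNodeKind.par L →
    ∀ u, T.upper v = some u →
      ∀ w ∈ T.V, ∀ s, T.kind w = DNodeKind.labeled s → DLabel.right L ∈ s →
        ∀ p : T.graph.Walk u w, p.IsPath → v ∉ p.support

/-- The induced directed relation on ⅋-nodes of a deNM-tree:
`(v1, v2)` when the path between the two premise positions of `v2`'s ⅋-link
passes through `v1`. -/
def PreTree.dirRel (T : PreTree) (v1 v2 : ℕ) : Prop :=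
  v1 ∈ T.V ∧ v2 ∈ T.V ∧ v1 ≠ v2 ∧
  (∃ L1, T.kind v1 = DNodeKind.par L1) ∧
  ∃ L2, T.kind v2 = DNodeKind.par L2 ∧
    ∃ u, T.upper v2 = some u ∧
      ∃ w ∈ T.V, ∃ s, T.kind w = DNodeKind.labeled s ∧ DLabel.right L2 ∈ s ∧
        ∃ p : T.graph.Walk u w, p.IsPath ∧ v1 ∈ p.support

/-- Directed acyclicity of a deNM-tree. -/
def PreTree.DirAcyclicD (T : PreTree) : Prop :=
  ∀ v, ¬ Relation.TransGen T.dirRel v v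

/-! ### The translation `T(Θ)` -/

/-- A ⅋-link of `Θ` gets an auxiliary labeled node exactly when its conclusion is a
premise of another ⅋-link. -/
def hasAux (Θ : ProofStructure) (L : MLLLink) : Prop :=
  L ∈ Θ.links ∧ ∃ l r c, L = MLLLink.par l r c ∧ premOfParLink Θ c

/-- The label contributed by an occurrence `x`: `ℓ_P` if `x` is the left premise of a
⅋-link `P`, `r_P` if `x` is the right premise of `P`. -/
def labelOfOcc (Θ : ProofStructure) (x : Occ) (d : DLabel) : Prop :=
  (∃ P, leftPremOfPar Θ x P ∧ d = DLabel.left P) ∨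
  (∃ P, rightPremOfPar Θ x P ∧ d = DLabel.right P)

/-- The labels carried by the (auxiliary) labeled node of a link `K`:
those contributed by the conclusions of `K`. -/
def linkLabel (Θ : ProofStructure) (K : MLLLink) (d : DLabel) : Prop :=
  ∃ x ∈ MLLLink.concs K, labelOfOcc Θ x d

/-- The node through which the subtree translating `K` connects upwards. -/
def OutIs (Θ : ProofStructure) (main aux : MLLLink → ℕ) (K : MLLLink) (v : ℕ) : Prop :=
  (hasAux Θ K ∧ v = aux K) ∨ (¬ hasAux Θ K ∧ v = main K)

/-- The edges of the translation. -/
def EdgeSpec (Θ : ProofStructure) (main aux : MLLLink → ℕ) (u v : ℕ) : Prop :=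
  (∃ x K M, K ∈ Θ.links ∧ M ∈ Θ.links ∧ x ∈ MLLLink.concs K ∧ x ∈ MLLLink.prems M ∧
      ¬ MLLLink.IsPar M ∧ OutIs Θ main aux K u ∧ v = main M) ∨
  (∃ K l r c, K ∈ Θ.links ∧ MLLLink.par l r c ∈ Θ.links ∧ l ∈ MLLLink.concs K ∧
      OutIs Θ main aux K u ∧ v = main (MLLLink.par l r c)) ∨
  (∃ L, hasAux Θ L ∧ u = main L ∧ v = aux L)

/-- The translation `T(Θ)` is defined: `S_∀ℓ(Θ)` is a tree, no ID-link has both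
conclusions premises of ⅋-links, and no ID-link has one conclusion a conclusion of `Θ`
while the other is a premise of a ⅋-link. -/
def TransDefined (Θ : ProofStructure) : Prop :=
  DRTreeL Θ ∧
  ∀ c1 c2, MLLLink.id c1 c2 ∈ Θ.links →
    ¬(premOfParLink Θ c1 ∧ premOfParLink Θ c2) ∧
    ¬(IsConcOfTheta Θ c1 ∧ premOfParLink Θ c2) ∧
    ¬(IsConcOfTheta Θ c2 ∧ premOfParLink Θ c1)

/-- `T` is (a copy of) the deNM-tree `T(Θ)` translating `Θ`. -/
def IsTranslation (Θ : ProofStructure) (T : PreTree) : Prop :=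
  TransDefined Θ ∧
  ∃ main aux : MLLLink → ℕ,
    (∀ L1 ∈ Θ.links, ∀ L2 ∈ Θ.links, main L1 = main L2 → L1 = L2) ∧
    (∀ L1 L2, hasAux Θ L1 → hasAux Θ L2 → aux L1 = aux L2 → L1 = L2) ∧
    (∀ L1 ∈ Θ.links, ∀ L2, hasAux Θ L2 → main L1 ≠ aux L2) ∧
    (∀ v, v ∈ T.V ↔ ((∃ L ∈ Θ.links, v = main L) ∨ (∃ L, hasAux Θ L ∧ v = aux L))) ∧
    (∀ L ∈ Θ.links, ¬ MLLLink.IsPar L →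
        ∃ s, T.kind (main L) = DNodeKind.labeled s ∧ ∀ d, d ∈ s ↔ linkLabel Θ L d) ∧
    (∀ L ∈ Θ.links, MLLLink.IsPar L → T.kind (main L) = DNodeKind.par L) ∧
    (∀ L, hasAux Θ L →
        ∃ s, T.kind (aux L) = DNodeKind.labeled s ∧ ∀ d, d ∈ s ↔ linkLabel Θ L d) ∧
    (∀ l r c, MLLLink.par l r c ∈ Θ.links →
        ∀ K ∈ Θ.links, l ∈ MLLLink.concs K →
          ∀ u, OutIs Θ main aux K u → T.upper (main (MLLLink.par l r c)) = some u) ∧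
    (∀ e, e ∈ T.edges ↔
        ∃ u v, e = s(u, v) ∧ (EdgeSpec Θ main aux u v ∨ EdgeSpec Θ main aux v u))

/-! ### The rewriting system and Algorithm A -/

def replaceN (v a : ℕ) : ℕ → ℕ := fun x => if x = v then a else x

/-- Eliminate the node `v`, letting `a` absorb the remaining connections of `v`
(used by the ⅋-elimination rule). -/
def PreTree.elimAt (T : PreTree) (v a : ℕ) : PreTree where
  V := T.V.erase v
  kind := T.kind
  edges := (T.edges.image (Sym2.map (replaceN v a))).filter (fun e => ¬ e.IsDiag)
  upper := T.upper

def mergeKind (k k' : DNodeKind) : DNodeKind :=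
  match k, k' with
  | DNodeKind.labeled s, DNodeKind.labeled s' => DNodeKind.labeled (s ∪ s')
  | k, _ => k

/-- Merge the labeled node `n'` into the labeled node `a`, taking the union of the
label sets (used by the union rule). -/
def PreTree.contract (T : PreTree) (a n' : ℕ) : PreTree where
  V := T.V.erase n'
  kind := fun x => if x = a then mergeKind (T.kind a) (T.kind n') else T.kind x
  edges := (T.edges.image (Sym2.map (replaceN n' a))).filter (fun e => ¬ e.IsDiag)
  upper := fun x => (T.upper x).map (replaceN n' a)

/-- The three rewrite rules. -/
inductive RRule : Type
  | elim | union | jump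

/-- A configuration of Algorithm A: the current deNM-tree, the active (labeled)
node, and the set of ⅋-links to which the local jump rule has been applied. -/
structure Config where
  tree : PreTree
  active : ℕ
  jumped : Finset MLLLink

/-- One application of a rewrite rule at the active node. -/
inductive Step : RRule → Config → Config → Prop
  | elim (c : Config) (v : ℕ) (L : MLLLink) (s : Finset DLabel) :
      c.active ∈ c.tree.V → v ∈ c.tree.V →
      c.tree.kind c.active = DNodeKind.labeled s →
      c.tree.kind v = DNodeKind.par L →
      c.tree.upper v = some c.active →
      s(c.active, v) ∈ c.tree.edges →
      DLabel.left L ∈ s → DLabel.right L ∈ s →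
      Step RRule.elim c
        { tree := c.tree.elimAt v c.active, active := c.active, jumped := c.jumped }
  | union (c : Config) (n' : ℕ) (s s' : Finset DLabel) :
      c.active ∈ c.tree.V → n' ∈ c.tree.V → n' ≠ c.active →
      c.tree.kind c.active = DNodeKind.labeled s →
      c.tree.kind n' = DNodeKind.labeled s' →
      s(c.active, n') ∈ c.tree.edges →
      Step RRule.union c
        { tree := c.tree.contract c.active n', active := c.active, jumped := c.jumped }
  | jump (c : Config) (v m : ℕ) (L : MLLLink) (s s' : Finset DLabel) :
      c.active ∈ c.tree.V → v ∈ c.tree.V → m ∈ c.tree.V →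
      c.tree.kind c.active = DNodeKind.labeled s →
      c.tree.kind v = DNodeKind.par L →
      s(c.active, v) ∈ c.tree.edges →
      c.tree.upper v ≠ some c.active →
      c.tree.kind m = DNodeKind.labeled s' →
      DLabel.right L ∈ s' →
      L ∉ c.jumped →
      Step RRule.jump c { tree := c.tree, active := m, jumped := insert L c.jumped }

def StepAny (c c' : Config) : Prop := ∃ r, Step r c c'

/-- No rewrite rule applies. -/
def Stuck (c : Config) : Prop := ∀ r c', ¬ Step r c c'

/-- `s` is the full label set `S_full` of `Θ`. -/
def SfullSpec (Θ : ProofStructure) (s : Finset DLabel) : Prop :=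
  ∀ d, d ∈ s ↔ ∃ l r c, MLLLink.par l r c ∈ Θ.links ∧
    (d = DLabel.left (MLLLink.par l r c) ∨ d = DLabel.right (MLLLink.par l r c))

/-- The terminal tree is a single degree-0 node labeled by `S_full`. -/
def FinalYes (Θ : ProofStructure) (c : Config) : Prop :=
  c.tree.V = {c.active} ∧ c.tree.edges = ∅ ∧
  ∃ s, c.tree.kind c.active = DNodeKind.labeled s ∧ SfullSpec Θ s

/-- Algorithm A with input `Θ` outputs yes. -/
def AlgAYes (Θ : ProofStructure) : Prop :=
  TransDefined Θ ∧
  ∀ T, IsTranslation Θ T → ∀ n, T.IsLabeledVertex n →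
    ∀ c', Relation.ReflTransGen StepAny { tree := T, active := n, jumped := ∅ } c' →
      Stuck c' → FinalYes Θ c'

/-- The local jump rule is applicable (up to the double-application check) at the
active node of `c`, targeting the ⅋-link `L`. -/
def JumpReady (c : Config) (L : MLLLink) : Prop :=
  c.active ∈ c.tree.V ∧ (∃ s, c.tree.kind c.active = DNodeKind.labeled s) ∧
  ∃ v ∈ c.tree.V, c.tree.kind v = DNodeKind.par L ∧
    s(c.active, v) ∈ c.tree.edges ∧ c.tree.upper v ≠ some c.active

/-! ## Auxiliary development -/

noncomputable section AuxDev
open Classical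

def codeL : MLLLink → ℕ
  | .id a b => Nat.pair 0 (Nat.pair a b)
  | .tensor a b c => Nat.pair 1 (Nat.pair a (Nat.pair b c))
  | .par a b c => Nat.pair 2 (Nat.pair a (Nat.pair b c))

def decL (n : ℕ) : MLLLink :=
  let t := n.unpair.1
  let m := n.unpair.2
  if t = 0 then .id m.unpair.1 m.unpair.2
  else if t = 1 then .tensor m.unpair.1 m.unpair.2.unpair.1 m.unpair.2.unpair.2
  else .par m.unpair.1 m.unpair.2.unpair.1 m.unpair.2.unpair.2

lemma decL_codeL (L : MLLLink) : decL (codeL L) = L := by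
  cases L <;> simp [codeL, decL]

def mainN (L : MLLLink) : ℕ := 2 * codeL L
def auxN (L : MLLLink) : ℕ := 2 * codeL L + 1

lemma codeL_inj : Function.Injective codeL := fun a b h => by
  rw [← decL_codeL a, ← decL_codeL b, h]

lemma mainN_inj : Function.Injective mainN := fun a b h => codeL_inj (by unfold mainN at h; omega)
lemma auxN_inj : Function.Injective auxN := fun a b h => codeL_inj (by unfold auxN at h; omega)
lemma mainN_ne_auxN (a b : MLLLink) : mainN a ≠ auxN b := by unfold mainN auxN; omega

lemma mainN_mod (L : MLLLink) : mainN L % 2 = 0 := by unfold mainN; omega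
lemma auxN_mod (L : MLLLink) : auxN L % 2 = 1 := by unfold auxN; omega
lemma mainN_div (L : MLLLink) : mainN L / 2 = codeL L := by unfold mainN; omega
lemma auxN_div (L : MLLLink) : auxN L / 2 = codeL L := by unfold auxN; omega

def allLabels (Θ : ProofStructure) : Finset DLabel :=
  Θ.links.biUnion fun P => {DLabel.left P, DLabel.right P}

def sFor (Θ : ProofStructure) (K : MLLLink) : Finset DLabel :=
  (allLabels Θ).filter fun d => linkLabel Θ K d

lemma mem_sFor {Θ : ProofStructure} {K : MLLLink} {d : DLabel} :
    d ∈ sFor Θ K ↔ linkLabel Θ K d := by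
  constructor
  · exact fun h => (Finset.mem_filter.1 h).2
  · intro h
    refine Finset.mem_filter.2 ⟨?_, h⟩
    obtain ⟨x, hx, hl⟩ := h
    rcases hl with ⟨P, ⟨hP, _⟩, rfl⟩ | ⟨P, ⟨hP, _⟩, rfl⟩ <;>
      exact Finset.mem_biUnion.2 ⟨P, hP, by simp⟩

def isParB : MLLLink → Bool
  | .par _ _ _ => true
  | _ => false

lemma isParB_iff {L : MLLLink} : isParB L = true ↔ L.IsPar := by
  cases L <;> simp [isParB, MLLLink.IsPar]

def outOf (Θ : ProofStructure) (K : MLLLink) : ℕ := if hasAux Θ K then auxN K else mainN K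

lemma OutIs_iff {Θ : ProofStructure} {K : MLLLink} {u : ℕ} :
    OutIs Θ mainN auxN K u ↔ u = outOf Θ K := by
  unfold OutIs outOf
  by_cases h : hasAux Θ K <;> simp [h]

def kindF (Θ : ProofStructure) (v : ℕ) : DNodeKind :=
  if v % 2 = 0 ∧ isParB (decL (v / 2)) = true then DNodeKind.par (decL (v / 2))
  else DNodeKind.labeled (sFor Θ (decL (v / 2)))

lemma kindF_main_par {Θ : ProofStructure} {L : MLLLink} (h : L.IsPar) :
    kindF Θ (mainN L) = DNodeKind.par L := by
  unfold kindF
  rw [mainN_div, decL_codeL]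
  simp [mainN_mod, isParB_iff.2 h]

lemma kindF_main_nonpar {Θ : ProofStructure} {L : MLLLink} (h : ¬ L.IsPar) :
    kindF Θ (mainN L) = DNodeKind.labeled (sFor Θ L) := by
  unfold kindF
  rw [mainN_div, decL_codeL]
  have : isParB L ≠ true := fun hh => h (isParB_iff.1 hh)
  simp [this]

lemma kindF_aux {Θ : ProofStructure} (L : MLLLink) :
    kindF Θ (auxN L) = DNodeKind.labeled (sFor Θ L) := by
  unfold kindF
  rw [auxN_div, decL_codeL]
  simp [auxN_mod]

def upperAt (Θ : ProofStructure) : MLLLink → Option ℕ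
  | .par l _ _ =>
      if h : ∃ K ∈ Θ.links, l ∈ MLLLink.concs K then some (outOf Θ h.choose) else none
  | _ => none

def upperF (Θ : ProofStructure) (v : ℕ) : Option ℕ :=
  if v % 2 = 0 then upperAt Θ (decL (v / 2)) else none

def VF (Θ : ProofStructure) : Finset ℕ :=
  Θ.links.image mainN ∪ (Θ.links.filter fun L => hasAux Θ L).image auxN

lemma mem_VF {Θ : ProofStructure} {v : ℕ} :
    v ∈ VF Θ ↔ (∃ L ∈ Θ.links, v = mainN L) ∨ (∃ L, hasAux Θ L ∧ v = auxN L) := by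
  unfold VF
  simp only [Finset.mem_union, Finset.mem_image, Finset.mem_filter]
  constructor
  · rintro (⟨L, hL, rfl⟩ | ⟨L, ⟨hL, hA⟩, rfl⟩)
    · exact Or.inl ⟨L, hL, rfl⟩
    · exact Or.inr ⟨L, hA, rfl⟩
  · rintro (⟨L, hL, rfl⟩ | ⟨L, hA, rfl⟩)
    · exact Or.inl ⟨L, hL, rfl⟩
    · exact Or.inr ⟨L, ⟨hA.1, hA⟩, rfl⟩

abbrev ES (Θ : ProofStructure) (u v : ℕ) : Prop := EdgeSpec Θ mainN auxN u v

def edgesF (Θ : ProofStructure) : Finset (Sym2 ℕ) :=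
  ((VF Θ ×ˢ VF Θ).image fun p => s(p.1, p.2)).filter
    fun e => ∃ u v, e = s(u, v) ∧ (ES Θ u v ∨ ES Θ v u)

lemma ES_mem {Θ : ProofStructure} {u v : ℕ} (h : ES Θ u v) : u ∈ VF Θ ∧ v ∈ VF Θ := by
  have outmem : ∀ K ∈ Θ.links, ∀ w, OutIs Θ mainN auxN K w → w ∈ VF Θ := by
    rintro K hK w (⟨hA, rfl⟩ | ⟨_, rfl⟩)
    · exact mem_VF.2 (Or.inr ⟨K, hA, rfl⟩)
    · exact mem_VF.2 (Or.inl ⟨K, hK, rfl⟩)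
  rcases h with ⟨x, K, M, hK, hM, _, _, _, hout, rfl⟩ |
    ⟨K, l, r, c, hK, hP, _, hout, rfl⟩ | ⟨L, hA, rfl, rfl⟩
  · exact ⟨outmem K hK u hout, mem_VF.2 (Or.inl ⟨M, hM, rfl⟩)⟩
  · exact ⟨outmem K hK u hout, mem_VF.2 (Or.inl ⟨_, hP, rfl⟩)⟩
  · exact ⟨mem_VF.2 (Or.inl ⟨L, hA.1, rfl⟩), mem_VF.2 (Or.inr ⟨L, hA, rfl⟩)⟩

lemma nodup_disjoint {Θ : ProofStructure} {L : MLLLink} (hL : L ∈ Θ.links) :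
    ∀ x, x ∈ MLLLink.concs L → x ∈ MLLLink.prems L → False := by
  intro x h1 h2
  have := Θ.nodupLink L hL
  rw [List.nodup_append] at this
  exact this.2.2 x h1 x h2 rfl

lemma ES_ne {Θ : ProofStructure} {u v : ℕ} (h : ES Θ u v) : u ≠ v := by
  have outne : ∀ K M : MLLLink, K ≠ M → ∀ w, OutIs Θ mainN auxN K w → w ≠ mainN M := by
    rintro K M hne w (⟨_, rfl⟩ | ⟨_, rfl⟩)
    · exact (mainN_ne_auxN M K).symm
    · exact fun hh => hne (mainN_inj hh)
  rcases h with ⟨x, K, M, hK, hM, hxc, hxp, _, hout, rfl⟩ |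
    ⟨K, l, r, c, hK, hP, hl, hout, rfl⟩ | ⟨L, hA, rfl, rfl⟩
  · refine outne K M (fun hh => ?_) u hout
    subst hh; exact nodup_disjoint hK x hxc hxp
  · refine outne K (.par l r c) (fun hh => ?_) u hout
    subst hh
    have : l ∈ MLLLink.concs (MLLLink.par l r c) := hl
    simp [MLLLink.concs] at this
    subst this
    exact nodup_disjoint hK l hl (by simp [MLLLink.prems])
  · exact mainN_ne_auxN L L

lemma mem_edgesF {Θ : ProofStructure} {e : Sym2 ℕ} :
    e ∈ edgesF Θ ↔ ∃ u v, e = s(u, v) ∧ (ES Θ u v ∨ ES Θ v u) := by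
  unfold edgesF
  rw [Finset.mem_filter]
  constructor
  · exact fun h => h.2
  · rintro ⟨u, v, rfl, h⟩
    refine ⟨Finset.mem_image.2 ⟨(u, v), Finset.mem_product.2 ?_, rfl⟩, u, v, rfl, h⟩
    rcases h with h | h
    · exact ⟨(ES_mem h).1, (ES_mem h).2⟩
    · exact ⟨(ES_mem h).2, (ES_mem h).1⟩

def TT (Θ : ProofStructure) : PreTree := ⟨VF Θ, kindF Θ, edgesF Θ, upperF Θ⟩

lemma TT_adj {Θ : ProofStructure} {x y : ℕ} :
    (TT Θ).graph.Adj x y ↔ x ≠ y ∧ s(x, y) ∈ edgesF Θ := Iff.rfl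

lemma TT_adj_ES {Θ : ProofStructure} {x y : ℕ} (h : (TT Θ).graph.Adj x y) :
    ES Θ x y ∨ ES Θ y x := by
  obtain ⟨hne, hmem⟩ := h
  obtain ⟨u, v, he, hspec⟩ := mem_edgesF.1 hmem
  rw [Sym2.eq_iff] at he
  rcases he with ⟨rfl, rfl⟩ | ⟨rfl, rfl⟩
  · exact hspec
  · exact hspec.symm

lemma isTranslation_TT {Θ : ProofStructure} (htd : TransDefined Θ) :
    IsTranslation Θ (TT Θ) := by
  refine ⟨htd, mainN, auxN, ?_, ?_, ?_, ?_, ?_, ?_, ?_, ?_, ?_⟩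
  · exact fun L1 _ L2 _ h => mainN_inj h
  · exact fun L1 L2 _ _ h => auxN_inj h
  · exact fun L1 _ L2 _ => mainN_ne_auxN L1 L2
  · exact fun v => mem_VF
  · exact fun L hL hnp => ⟨sFor Θ L, kindF_main_nonpar hnp, fun d => mem_sFor⟩
  · exact fun L hL hp => kindF_main_par hp
  · exact fun L hA => ⟨sFor Θ L, kindF_aux L, fun d => mem_sFor⟩
  · intro l r c hP K hK hl u hout
    show upperF Θ (mainN (.par l r c)) = some u
    unfold upperF
    rw [mainN_div, decL_codeL]
    simp only [mainN_mod, if_true]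
    have hex : ∃ K ∈ Θ.links, l ∈ MLLLink.concs K := ⟨K, hK, hl⟩
    show (if h : ∃ K ∈ Θ.links, l ∈ MLLLink.concs K then some (outOf Θ h.choose) else none) = some u
    rw [dif_pos hex]
    have hspec := hex.choose_spec
    have : hex.choose = K := Θ.concUnique _ hspec.1 _ hK l hspec.2 hl
    rw [OutIs_iff.1 hout, this]
  · exact fun e => mem_edgesF

end AuxDev

noncomputable section InvDev
open Classical

def AR2 (G : SimpleGraph ℕ) (v1 v2 x y : ℕ) : Prop :=
  Relation.ReflTransGen (fun p q => G.Adj p q ∧ p ≠ v1 ∧ p ≠ v2 ∧ q ≠ v1 ∧ q ≠ v2) x y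

lemma graph_adj (T : PreTree) (x y : ℕ) :
    T.graph.Adj x y ↔ x ≠ y ∧ s(x, y) ∈ T.edges := Iff.rfl

def Blocked (T' : PreTree) (L1 L2 : MLLLink) : Prop :=
  mainN L1 ∈ T'.V ∧ mainN L2 ∈ T'.V ∧
  T'.kind (mainN L1) = DNodeKind.par L1 ∧ T'.kind (mainN L2) = DNodeKind.par L2 ∧
  ∀ u, T'.upper (mainN L2) = some u →
    ∀ w ∈ T'.V, ∀ s, T'.kind w = DNodeKind.labeled s → DLabel.right L2 ∈ s →
      ¬ AR2 T'.graph (mainN L1) (mainN L2) u w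

def Cyc (Θ : ProofStructure) (L : MLLLink) : Prop := Relation.TransGen (deNMRel Θ) L L

lemma cyc_pred {Θ : ProofStructure} {L : MLLLink} (h : Cyc Θ L) :
    ∃ L0, Cyc Θ L0 ∧ deNMRel Θ L0 L := by
  obtain ⟨b, hb, hR⟩ := Relation.TransGen.tail'_iff.1 h
  exact ⟨b, Relation.TransGen.trans_left (.single hR) hb, hR⟩

def InvC (Θ : ProofStructure) (c : Config) : Prop :=
  (∀ e ∈ c.tree.edges, ¬ e.IsDiag) ∧
  (∀ v ∈ c.tree.V, ∀ L, c.tree.kind v = DNodeKind.par L →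
      v = mainN L ∧ L ∈ Θ.links ∧ L.IsPar) ∧
  (∀ L1 L2, Cyc Θ L1 → Cyc Θ L2 → deNMRel Θ L1 L2 → Blocked c.tree L1 L2)

lemma kind_clash {s : Finset DLabel} {L : MLLLink} (h : DNodeKind.labeled s = DNodeKind.par L) :
    False := by cases h

lemma AR2_build {T : PreTree} {a b v1 v2 : ℕ}
    (hab : s(a, b) ∈ T.edges) (hne : a ≠ b)
    (ha1 : a ≠ v1) (ha2 : a ≠ v2) (hb1 : b ≠ v1) (hb2 : b ≠ v2)
    {p q p0 q0 : ℕ}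
    (he : s(p0, q0) ∈ T.edges) (hpq0 : p0 ≠ q0)
    (hp0 : replaceN b a p0 = p) (hq0 : replaceN b a q0 = q)
    (hp1 : p ≠ v1) (hp2 : p ≠ v2) (hq1 : q ≠ v1) (hq2 : q ≠ v2) :
    AR2 T.graph v1 v2 p q := by
  have hcase : ∀ x0 x : ℕ, replaceN b a x0 = x → x0 = x ∨ (x0 = b ∧ x = a) := by
    intro x0 x hx
    unfold replaceN at hx
    by_cases h : x0 = b
    · right; rw [if_pos h] at hx; exact ⟨h, hx.symm⟩
    · left; rw [if_neg h] at hx; exact hx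
  have hadjab : T.graph.Adj a b := ⟨hne, hab⟩
  have hadj0 : T.graph.Adj p0 q0 := ⟨hpq0, he⟩
  rcases hcase _ _ hp0 with rfl | ⟨rfl, rfl⟩ <;> rcases hcase _ _ hq0 with rfl | ⟨rfl, rfl⟩
  · exact Relation.ReflTransGen.single ⟨hadj0, hp1, hp2, hq1, hq2⟩
  · exact (Relation.ReflTransGen.single ⟨hadj0, hp1, hp2, hb1, hb2⟩).trans
      (Relation.ReflTransGen.single ⟨hadjab.symm, hb1, hb2, ha1, ha2⟩)
  · exact (Relation.ReflTransGen.single ⟨hadjab, ha1, ha2, hb1, hb2⟩).trans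
      (Relation.ReflTransGen.single ⟨hadj0, hb1, hb2, hq1, hq2⟩)
  · exact ((Relation.ReflTransGen.single ⟨hadjab, ha1, ha2, hb1, hb2⟩).trans
      (Relation.ReflTransGen.single ⟨hadj0, hb1, hb2, hb1, hb2⟩)).trans
      (Relation.ReflTransGen.single ⟨hadjab.symm, hb1, hb2, ha1, ha2⟩)

lemma lift_AR2_step {T : PreTree} {a b v1 v2 : ℕ}
    (hab : s(a, b) ∈ T.edges) (hne : a ≠ b)
    (ha1 : a ≠ v1) (ha2 : a ≠ v2) (hb1 : b ≠ v1) (hb2 : b ≠ v2)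
    (hnd : ∀ e ∈ T.edges, ¬ e.IsDiag)
    {p q : ℕ}
    (hm : s(p, q) ∈ (T.edges.image (Sym2.map (replaceN b a))).filter fun e => ¬ e.IsDiag)
    (hp1 : p ≠ v1) (hp2 : p ≠ v2) (hq1 : q ≠ v1) (hq2 : q ≠ v2) :
    AR2 T.graph v1 v2 p q := by
  rw [Finset.mem_filter, Finset.mem_image] at hm
  obtain ⟨⟨e, he, hmap⟩, _⟩ := hm
  induction e using Sym2.ind with
  | _ p0 q0 =>
    have hpq0 : p0 ≠ q0 := by
      intro h
      exact hnd _ he (by rw [h]; exact Sym2.mk_isDiag_iff.2 rfl)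
    rw [Sym2.map_pair_eq, Sym2.eq_iff] at hmap
    rcases hmap with ⟨hp0, hq0⟩ | ⟨hp0, hq0⟩
    · exact AR2_build hab hne ha1 ha2 hb1 hb2 he hpq0 hp0 hq0 hp1 hp2 hq1 hq2
    · exact AR2_build hab hne ha1 ha2 hb1 hb2 (by rwa [Sym2.eq_swap] at he) hpq0.symm
        hq0 hp0 hp1 hp2 hq1 hq2

lemma lift_AR2 {T : PreTree} {a b v1 v2 : ℕ}
    (hab : s(a, b) ∈ T.edges) (hne : a ≠ b)
    (ha1 : a ≠ v1) (ha2 : a ≠ v2) (hb1 : b ≠ v1) (hb2 : b ≠ v2)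
    (hnd : ∀ e ∈ T.edges, ¬ e.IsDiag)
    {x y : ℕ}
    (h : Relation.ReflTransGen (fun p q =>
        (p ≠ q ∧ s(p, q) ∈ (T.edges.image (Sym2.map (replaceN b a))).filter fun e => ¬ e.IsDiag)
        ∧ p ≠ v1 ∧ p ≠ v2 ∧ q ≠ v1 ∧ q ≠ v2) x y) :
    AR2 T.graph v1 v2 x y := by
  induction h with
  | refl => exact Relation.ReflTransGen.refl
  | tail _ hstep ih =>
      obtain ⟨⟨_, hm⟩, h1, h2, h3, h4⟩ := hstep
      exact ih.trans (lift_AR2_step hab hne ha1 ha2 hb1 hb2 hnd hm h1 h2 h3 h4)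

lemma no_elim_cyc {Θ : ProofStructure} {c : Config} (hI : InvC Θ c) {v : ℕ} {L : MLLLink}
    {s : Finset DLabel}
    (hv : v ∈ c.tree.V) (hkv : c.tree.kind v = DNodeKind.par L)
    (hact : c.active ∈ c.tree.V) (hks : c.tree.kind c.active = DNodeKind.labeled s)
    (hup : c.tree.upper v = some c.active) (hr : DLabel.right L ∈ s) : ¬ Cyc Θ L := by
  intro hc
  obtain ⟨L0, hc0, hR⟩ := cyc_pred hc
  obtain ⟨_, _, _, _, hB⟩ := hI.2.2 L0 L hc0 hc hR
  have hvm : v = mainN L := (hI.2.1 v hv L hkv).1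
  exact hB c.active (hvm ▸ hup) c.active hact s hks hr Relation.ReflTransGen.refl

lemma step_Inv {Θ : ProofStructure} {r : RRule} {c c' : Config} (hI : InvC Θ c)
    (hs : Step r c c') : InvC Θ c' := by
  cases hs with
  | elim c v L s hact hv hks hkv hup hedge hl hr =>
      have hvm : v = mainN L := (hI.2.1 v hv L hkv).1
      have hnotcyc : ¬ Cyc Θ L := no_elim_cyc hI hv hkv hact hks hup hr
      have hav : c.active ≠ v := by
        intro h; rw [h, hkv] at hks; exact kind_clash hks.symm
      refine ⟨fun e he => (Finset.mem_filter.1 he).2, ?_, ?_⟩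
      · intro w hw Lw hkw
        exact hI.2.1 w (Finset.mem_erase.1 hw).2 Lw hkw
      · intro L1 L2 hc1 hc2 hR
        obtain ⟨hm1, hm2, hk1, hk2, hB⟩ := hI.2.2 L1 L2 hc1 hc2 hR
        have hL1ne : mainN L1 ≠ v := by
          rw [hvm]; intro h; exact hnotcyc ((mainN_inj h.symm) ▸ hc1)
        have hL2ne : mainN L2 ≠ v := by
          rw [hvm]; intro h; exact hnotcyc ((mainN_inj h.symm) ▸ hc2)
        have hane1 : c.active ≠ mainN L1 := by
          intro h; rw [h, hk1] at hks; exact kind_clash hks.symm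
        have hane2 : c.active ≠ mainN L2 := by
          intro h; rw [h, hk2] at hks; exact kind_clash hks.symm
        refine ⟨Finset.mem_erase.2 ⟨hL1ne, hm1⟩, Finset.mem_erase.2 ⟨hL2ne, hm2⟩, hk1, hk2, ?_⟩
        intro u hu w hw s' hkw hrs har
        refine hB u hu w (Finset.mem_erase.1 hw).2 s' hkw hrs ?_
        exact lift_AR2 hedge hav hane1 hane2 hL1ne.symm hL2ne.symm hI.1 har
  | union c n' s s' hact hn' hne hks hkn hedge =>
      have hkact : ∀ x, (c.tree.contract c.active n').kind x =
          if x = c.active then mergeKind (c.tree.kind c.active) (c.tree.kind n') else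
            c.tree.kind x := fun x => rfl
      refine ⟨fun e he => (Finset.mem_filter.1 he).2, ?_, ?_⟩
      · intro w hw Lw hkw
        rw [hkact] at hkw
        by_cases hwa : w = c.active
        · rw [if_pos hwa, hks, hkn] at hkw
          exact absurd hkw (by simp [mergeKind])
        · rw [if_neg hwa] at hkw
          exact hI.2.1 w (Finset.mem_erase.1 hw).2 Lw hkw
      · intro L1 L2 hc1 hc2 hR
        obtain ⟨hm1, hm2, hk1, hk2, hB⟩ := hI.2.2 L1 L2 hc1 hc2 hR
        have hane1 : c.active ≠ mainN L1 := by
          intro h; rw [h, hk1] at hks; exact kind_clash hks.symm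
        have hane2 : c.active ≠ mainN L2 := by
          intro h; rw [h, hk2] at hks; exact kind_clash hks.symm
        have hnne1 : n' ≠ mainN L1 := by
          intro h; rw [h, hk1] at hkn; exact kind_clash hkn.symm
        have hnne2 : n' ≠ mainN L2 := by
          intro h; rw [h, hk2] at hkn; exact kind_clash hkn.symm
        refine ⟨Finset.mem_erase.2 ⟨Ne.symm hnne1, hm1⟩,
          Finset.mem_erase.2 ⟨Ne.symm hnne2, hm2⟩,
          by rw [hkact, if_neg (Ne.symm hane1)]; exact hk1,
          by rw [hkact, if_neg (Ne.symm hane2)]; exact hk2, ?_⟩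
        intro u hu w hw s'' hkw hrs har
        -- decode upper
        have hu' : ∃ u0, c.tree.upper (mainN L2) = some u0 ∧ replaceN n' c.active u0 = u := by
          have : (Option.map (replaceN n' c.active) (c.tree.upper (mainN L2))) = some u := hu
          rwa [Option.map_eq_some_iff] at this
        obtain ⟨u0, hu0, hu0e⟩ := hu'
        -- the lifted middle part
        have hmid : AR2 c.tree.graph (mainN L1) (mainN L2) u w :=
          lift_AR2 hedge (Ne.symm hne) hane1 hane2 hnne1 hnne2 hI.1 har
        -- glue at u
        have hglueu : AR2 c.tree.graph (mainN L1) (mainN L2) u0 u := by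
          by_cases h0 : u0 = n'
          · subst h0
            have : replaceN u0 c.active u0 = c.active := by unfold replaceN; simp
            rw [this] at hu0e
            subst hu0e
            exact Relation.ReflTransGen.single
              ⟨⟨hne, by rwa [Sym2.eq_swap]⟩, hnne1, hnne2, hane1, hane2⟩
          · have : replaceN n' c.active u0 = u0 := by unfold replaceN; rw [if_neg h0]
            rw [this] at hu0e; subst hu0e; exact Relation.ReflTransGen.refl
        -- glue at w
        rw [hkact] at hkw
        by_cases hwa : w = c.active
        · subst hwa
          rw [if_pos rfl, hks, hkn] at hkw
          have hsw : s'' = s ∪ s' := by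
            simp [mergeKind] at hkw; exact hkw.symm
          rw [hsw, Finset.mem_union] at hrs
          rcases hrs with hrs | hrs
          · exact hB u0 hu0 c.active hact s hks hrs (hglueu.trans hmid)
          · refine hB u0 hu0 n' hn' s' hkn hrs ((hglueu.trans hmid).trans ?_)
            exact Relation.ReflTransGen.single ⟨⟨Ne.symm hne, hedge⟩, hane1, hane2, hnne1, hnne2⟩
        · rw [if_neg hwa] at hkw
          exact hB u0 hu0 w (Finset.mem_erase.1 hw).2 s'' hkw hrs (hglueu.trans hmid)
  | jump c v m L s s' _ _ _ _ _ _ _ _ _ _ =>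
      exact ⟨hI.1, hI.2.1, hI.2.2⟩

end InvDev

noncomputable section DRDev
open Classical SimpleGraph

lemma par_facts {Θ : ProofStructure} {l r c : Occ} (h : MLLLink.par l r c ∈ Θ.links) :
    l ≠ r ∧ l ≠ c ∧ r ≠ c := by
  have := Θ.nodupLink _ h
  simp [MLLLink.concs, MLLLink.prems] at this
  tauto

lemma id_facts {Θ : ProofStructure} {a b : Occ} (h : MLLLink.id a b ∈ Θ.links) : a ≠ b := by
  have := Θ.nodupLink _ h
  simp [MLLLink.concs, MLLLink.prems] at this
  exact this

lemma tensor_facts {Θ : ProofStructure} {l r c : Occ} (h : MLLLink.tensor l r c ∈ Θ.links) :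
    l ≠ r ∧ l ≠ c ∧ r ≠ c := by
  have := Θ.nodupLink _ h
  simp [MLLLink.concs, MLLLink.prems] at this
  tauto

lemma drAdj_par {Θ : ProofStructure} {l r c : Occ} (h : MLLLink.par l r c ∈ Θ.links) :
    (DRGraphL Θ).Adj l c :=
  ⟨(par_facts h).2.1, _, h, Or.inl (by simp [drStep, extremeLeft])⟩

lemma drAdj_id {Θ : ProofStructure} {a b : Occ} (h : MLLLink.id a b ∈ Θ.links) :
    (DRGraphL Θ).Adj a b :=
  ⟨id_facts h, _, h, Or.inl (by simp [drStep])⟩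

lemma drAdj_tensor_left {Θ : ProofStructure} {l r c : Occ} (h : MLLLink.tensor l r c ∈ Θ.links) :
    (DRGraphL Θ).Adj l c :=
  ⟨(tensor_facts h).2.1, _, h, Or.inl (Or.inl ⟨rfl, rfl⟩)⟩

lemma drAdj_tensor_right {Θ : ProofStructure} {l r c : Occ} (h : MLLLink.tensor l r c ∈ Θ.links) :
    (DRGraphL Θ).Adj r c :=
  ⟨(tensor_facts h).2.2, _, h, Or.inl (Or.inr ⟨rfl, rfl⟩)⟩

lemma conc_mem_occ {Θ : ProofStructure} {K : MLLLink} {x : Occ} (hK : K ∈ Θ.links)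
    (hx : x ∈ MLLLink.concs K) : x ∈ Θ.occSet := ⟨K, hK, Or.inl hx⟩

lemma prem_mem_occ {Θ : ProofStructure} {K : MLLLink} {x : Occ} (hK : K ∈ Θ.links)
    (hx : x ∈ MLLLink.prems K) : x ∈ Θ.occSet := ⟨K, hK, Or.inr hx⟩

lemma drAdj_occ {Θ : ProofStructure} {x y : Occ} (h : (DRGraphL Θ).Adj x y) :
    x ∈ Θ.occSet ∧ y ∈ Θ.occSet := by
  obtain ⟨hne, L, hL, hstep⟩ := h
  have main : ∀ a b : Occ, drStep extremeLeft L a b → a ∈ Θ.occSet ∧ b ∈ Θ.occSet := by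
    intro a b hs
    cases L with
    | id d1 d2 =>
        obtain ⟨rfl, rfl⟩ := hs
        exact ⟨conc_mem_occ hL (by simp [MLLLink.concs]),
          conc_mem_occ hL (by simp [MLLLink.concs])⟩
    | tensor l r c =>
        rcases hs with ⟨rfl, rfl⟩ | ⟨rfl, rfl⟩ <;>
          exact ⟨prem_mem_occ hL (by simp [MLLLink.prems]),
            conc_mem_occ hL (by simp [MLLLink.concs])⟩
    | par l r c =>
        simp only [drStep, extremeLeft] at hs
        have hs : a = l ∧ b = c := hs
        obtain ⟨rfl, rfl⟩ := hs
        exact ⟨prem_mem_occ hL (by simp [MLLLink.prems]),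
          conc_mem_occ hL (by simp [MLLLink.concs])⟩
  rcases hstep with h | h
  · exact main _ _ h
  · exact (main _ _ h).symm

lemma walk_occ {Θ : ProofStructure} :
    ∀ {x y : Occ} (w : (DRGraphL Θ).Walk x y), x ∈ Θ.occSet →
      ∀ z ∈ w.support, z ∈ Θ.occSet := by
  intro x y w
  induction w with
  | nil =>
      intro hx z hz
      rw [Walk.support_nil, List.mem_singleton] at hz
      rwa [hz]
  | cons h wtl ih =>
      intro hx z hz
      rw [Walk.support_cons] at hz
      rcases List.mem_cons.1 hz with rfl | hz'
      · exact hx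
      · exact ih (drAdj_occ h).2 z hz'

lemma lift_walk {G : SimpleGraph ℕ} {s : Set ℕ} :
    ∀ {a b : ℕ} (w : G.Walk a b) (ha : a ∈ s) (hb : b ∈ s),
      (∀ z ∈ w.support, z ∈ s) →
      ∃ w' : (G.induce s).Walk ⟨a, ha⟩ ⟨b, hb⟩, w'.support.map Subtype.val = w.support := by
  intro a b w
  induction w with
  | nil => exact fun ha hb _ => ⟨.nil, by simp⟩
  | @cons u v c h wtl ih =>
      intro ha hb hs
      have hv : v ∈ s := hs v (by
        rw [Walk.support_cons]; exact List.mem_cons_of_mem _ wtl.start_mem_support)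
      obtain ⟨w', hw'⟩ := ih hv hb (fun z hz => hs z (by
        rw [Walk.support_cons]; exact List.mem_cons_of_mem _ hz))
      refine ⟨.cons (by exact h) w', ?_⟩
      show u :: w'.support.map Subtype.val = u :: wtl.support
      rw [hw']

lemma no_avoid (Θ : ProofStructure) (htree : DRTreeL Θ) {a b c1 : Occ}
    (ha : a ∈ Θ.occSet) (hb : b ∈ Θ.occSet) (hc : c1 ∈ Θ.occSet)
    (p : (DRGraphL Θ).Walk a b) (hp : p.IsPath) (hcp : c1 ∈ p.support)
    (q : (DRGraphL Θ).Walk a b) (hq : c1 ∉ q.support) : False := by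
  obtain ⟨p', hp's⟩ := lift_walk p ha hb (walk_occ p ha)
  obtain ⟨q', hq's⟩ := lift_walk q ha hb (walk_occ q ha)
  have hp'path : p'.IsPath := by
    apply SimpleGraph.Walk.IsPath.mk'
    have := hp.support_nodup
    rw [← hp's] at this
    exact this.of_map
  obtain ⟨P0, _, hun⟩ := htree.existsUnique_path ⟨a, ha⟩ ⟨b, hb⟩
  have h1 : p' = P0 := hun p' hp'path
  have h2 : q'.bypass = P0 := hun q'.bypass q'.bypass_isPath
  have hcin : (⟨c1, hc⟩ : Θ.occSet) ∈ p'.support := by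
    rw [← hp's] at hcp
    obtain ⟨z, hz, hzv⟩ := List.mem_map.1 hcp
    rwa [show z = (⟨c1, hc⟩ : Θ.occSet) from Subtype.ext hzv] at hz
  rw [h1, ← h2] at hcin
  have := q'.support_bypass_subset hcin
  apply hq
  rw [← hq's]
  exact List.mem_map.2 ⟨_, this, rfl⟩

end DRDev

noncomputable section SigmaDev
open Classical SimpleGraph

def DRR (Θ : ProofStructure) (c1 c2 : Occ) (o o' : Occ) : Prop :=
  Relation.ReflTransGen
    (fun p q => (DRGraphL Θ).Adj p q ∧ p ≠ c1 ∧ p ≠ c2 ∧ q ≠ c1 ∧ q ≠ c2) o o'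

lemma DRR_symm {Θ : ProofStructure} {c1 c2 o o' : Occ} (h : DRR Θ c1 c2 o o') :
    DRR Θ c1 c2 o' o :=
  (@Relation.ReflTransGen.stdSymm _ _
    ⟨fun _ _ hpq => ⟨hpq.1.symm, hpq.2.2.2.1, hpq.2.2.2.2, hpq.2.1, hpq.2.2.1⟩⟩).symm _ _ h

lemma DRR_single {Θ : ProofStructure} {c1 c2 o o' : Occ} (h : (DRGraphL Θ).Adj o o')
    (h1 : o ≠ c1) (h2 : o ≠ c2) (h3 : o' ≠ c1) (h4 : o' ≠ c2) : DRR Θ c1 c2 o o' :=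
  Relation.ReflTransGen.single ⟨h, h1, h2, h3, h4⟩

lemma DRR_c_start {Θ : ProofStructure} {c1 c2 o z : Occ} (h : DRR Θ c1 c2 o z)
    (ho : o = c1 ∨ o = c2) : z = o := by
  rcases h.cases_head with heq | ⟨b, ⟨_, h1, h2, _⟩, _⟩
  · exact heq.symm
  · rcases ho with rfl | rfl
    · exact absurd rfl h1
    · exact absurd rfl h2

lemma premOfPar_isPar {Θ : ProofStructure} {x : Occ} {M : MLLLink} (hM : M ∈ Θ.links)
    (hx : x ∈ MLLLink.prems M) (hp : premOfParLink Θ x) : M.IsPar := by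
  obtain ⟨P, hP | hP⟩ := hp
  · obtain ⟨hPl, r', c', rfl⟩ := hP
    have := Θ.premUnique _ hPl _ hM x (by simp [MLLLink.prems]) hx
    rw [← this]; simp [MLLLink.IsPar]
  · obtain ⟨hPl, l', c', rfl⟩ := hP
    have := Θ.premUnique _ hPl _ hM x (by simp [MLLLink.prems]) hx
    rw [← this]; simp [MLLLink.IsPar]

lemma hasAux_par {Θ : ProofStructure} {l r c : Occ} (h : hasAux Θ (MLLLink.par l r c)) :
    premOfParLink Θ c := by
  obtain ⟨_, a, b, cc, heq, hpp⟩ := h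
  injection heq with h1 h2 h3
  rw [h3]; exact hpp

lemma hasAux_shape {Θ : ProofStructure} {K : MLLLink} (h : hasAux Θ K) :
    ∃ l r c, K = MLLLink.par l r c := by
  obtain ⟨_, a, b, cc, heq, _⟩ := h
  exact ⟨a, b, cc, heq⟩

section Fixed

variable {Θ : ProofStructure} {l1 r1 c1 l2 r2 c2 : Occ}

def RepB (Θ : ProofStructure) (l1 r1 c1 l2 r2 c2 : Occ) (vtx : ℕ) (o : Occ) : Prop :=
  (∃ K ∈ Θ.links, vtx = mainN K ∧ o ∈ MLLLink.concs K ∧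
      K ≠ MLLLink.par l1 r1 c1 ∧ K ≠ MLLLink.par l2 r2 c2) ∨
  (∃ K, hasAux Θ K ∧ vtx = auxN K ∧ o ∈ MLLLink.concs K ∧
      K ≠ MLLLink.par l1 r1 c1 ∧ K ≠ MLLLink.par l2 r2 c2) ∨
  (hasAux Θ (MLLLink.par l1 r1 c1) ∧ vtx = auxN (MLLLink.par l1 r1 c1) ∧
      ∃ r' cp, MLLLink.par c1 r' cp ∈ Θ.links ∧ o = cp) ∨
  (hasAux Θ (MLLLink.par l2 r2 c2) ∧ vtx = auxN (MLLLink.par l2 r2 c2) ∧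
      ∃ r' cp, MLLLink.par c2 r' cp ∈ Θ.links ∧ o = cp)

lemma conc_c1 (hL1 : MLLLink.par l1 r1 c1 ∈ Θ.links) {K : MLLLink} (hK : K ∈ Θ.links)
    (hx : c1 ∈ MLLLink.concs K) : K = MLLLink.par l1 r1 c1 :=
  Θ.concUnique K hK _ hL1 c1 hx (by simp [MLLLink.concs])

lemma rep_link {vtx : ℕ} {K : MLLLink} (h : vtx = mainN K ∨ vtx = auxN K) :
    decL (vtx / 2) = K := by
  rcases h with rfl | rfl
  · rw [mainN_div, decL_codeL]
  · rw [auxN_div, decL_codeL]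

lemma repNorm {vtx : ℕ} {o : Occ} (h : RepB Θ l1 r1 c1 l2 r2 c2 vtx o) :
    (∃ K, K ∈ Θ.links ∧ decL (vtx / 2) = K ∧ o ∈ MLLLink.concs K ∧
        K ≠ MLLLink.par l1 r1 c1 ∧ K ≠ MLLLink.par l2 r2 c2) ∨
    (decL (vtx / 2) = MLLLink.par l1 r1 c1 ∧
        ∃ rr cp, MLLLink.par c1 rr cp ∈ Θ.links ∧ o = cp) ∨
    (decL (vtx / 2) = MLLLink.par l2 r2 c2 ∧
        ∃ rr cp, MLLLink.par c2 rr cp ∈ Θ.links ∧ o = cp) := by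
  rcases h with ⟨K, hK, hv, ho, h1, h2⟩ | ⟨K, hA, hv, ho, h1, h2⟩ |
      ⟨hA, hv, rr, cp, hP, rfl⟩ | ⟨hA, hv, rr, cp, hP, rfl⟩
  · exact Or.inl ⟨K, hK, rep_link (Or.inl hv), ho, h1, h2⟩
  · exact Or.inl ⟨K, hA.1, rep_link (Or.inr hv), ho, h1, h2⟩
  · exact Or.inr (Or.inl ⟨rep_link (Or.inr hv), rr, _, hP, rfl⟩)
  · exact Or.inr (Or.inr ⟨rep_link (Or.inr hv), rr, _, hP, rfl⟩)

lemma repConn (hL1 : MLLLink.par l1 r1 c1 ∈ Θ.links) (hL2 : MLLLink.par l2 r2 c2 ∈ Θ.links)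
    (hne12 : MLLLink.par l1 r1 c1 ≠ MLLLink.par l2 r2 c2)
    {vtx : ℕ} {o o' : Occ}
    (h : RepB Θ l1 r1 c1 l2 r2 c2 vtx o) (h' : RepB Θ l1 r1 c1 l2 r2 c2 vtx o') :
    DRR Θ c1 c2 o o' := by
  have idcase : ∀ (K : MLLLink), K ∈ Θ.links → K ≠ MLLLink.par l1 r1 c1 →
      K ≠ MLLLink.par l2 r2 c2 → o ∈ MLLLink.concs K → o' ∈ MLLLink.concs K →
      DRR Θ c1 c2 o o' := by
    intro K hK hK1 hK2 ho ho'
    have havoid : ∀ z ∈ MLLLink.concs K, z ≠ c1 ∧ z ≠ c2 := by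
      intro z hz
      constructor
      · intro hz1; rw [hz1] at hz; exact hK1 (conc_c1 hL1 hK hz)
      · intro hz2; rw [hz2] at hz; exact hK2 (conc_c1 hL2 hK hz)
    cases K with
    | id a b =>
        simp only [MLLLink.concs, List.mem_cons, List.mem_singleton, List.not_mem_nil,
          or_false] at ho ho'
        have ha := havoid a (by simp [MLLLink.concs])
        have hb := havoid b (by simp [MLLLink.concs])
        rcases ho with rfl | rfl <;> rcases ho' with rfl | rfl
        · exact Relation.ReflTransGen.refl
        · exact DRR_single (drAdj_id hK) ha.1 ha.2 hb.1 hb.2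
        · exact DRR_single (drAdj_id hK).symm hb.1 hb.2 ha.1 ha.2
        · exact Relation.ReflTransGen.refl
    | tensor a b cc =>
        simp only [MLLLink.concs, List.mem_singleton] at ho ho'
        rw [ho, ho']
        exact Relation.ReflTransGen.refl
    | par a b cc =>
        simp only [MLLLink.concs, List.mem_singleton] at ho ho'
        rw [ho, ho']
        exact Relation.ReflTransGen.refl
  rcases repNorm h with ⟨K, hK, hdK, ho, hK1, hK2⟩ | ⟨hdK, rr, cp, hP, rfl⟩ |
      ⟨hdK, rr, cp, hP, rfl⟩ <;>
    rcases repNorm h' with ⟨K', hK', hdK', ho', hK1', hK2'⟩ | ⟨hdK', rr', cp', hP', rfl⟩ |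
      ⟨hdK', rr', cp', hP', rfl⟩
  · exact idcase K hK hK1 hK2 ho ((hdK.symm.trans hdK') ▸ ho')
  · exact absurd (hdK.symm.trans hdK') hK1
  · exact absurd (hdK.symm.trans hdK') hK2
  · exact absurd (hdK.symm.trans hdK').symm hK1'
  · have huniq : MLLLink.par c1 rr o = MLLLink.par c1 rr' o' :=
      Θ.premUnique _ hP _ hP' c1 (by simp [MLLLink.prems]) (by simp [MLLLink.prems])
    injection huniq with e1 e2 e3
    rw [e3]
    exact Relation.ReflTransGen.refl
  · exact absurd (hdK.symm.trans hdK') hne12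
  · exact absurd (hdK.symm.trans hdK').symm hK2'
  · exact absurd (hdK.symm.trans hdK').symm hne12
  · have huniq : MLLLink.par c2 rr o = MLLLink.par c2 rr' o' :=
      Θ.premUnique _ hP _ hP' c2 (by simp [MLLLink.prems]) (by simp [MLLLink.prems])
    injection huniq with e1 e2 e3
    rw [e3]
    exact Relation.ReflTransGen.refl

lemma esRep (hL1 : MLLLink.par l1 r1 c1 ∈ Θ.links) (hL2 : MLLLink.par l2 r2 c2 ∈ Θ.links)
    {u v : ℕ}
    (hu1 : u ≠ mainN (MLLLink.par l1 r1 c1)) (hu2 : u ≠ mainN (MLLLink.par l2 r2 c2))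
    (hv1 : v ≠ mainN (MLLLink.par l1 r1 c1)) (hv2 : v ≠ mainN (MLLLink.par l2 r2 c2))
    (h : ES Θ u v) :
    ∃ o o', RepB Θ l1 r1 c1 l2 r2 c2 u o ∧ RepB Θ l1 r1 c1 l2 r2 c2 v o' ∧
      DRR Θ c1 c2 o o' := by
  rcases h with ⟨x, K, M, hK, hM, hxc, hxp, hMnp, hout, rfl⟩ |
      ⟨K, l, r, cp, hK, hP, hl, hout, rfl⟩ | ⟨L, hA, rfl, rfl⟩
  · -- tensor-above edge
    cases M with
    | id a b => simp [MLLLink.prems] at hxp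
    | par a b cc => exact absurd trivial hMnp
    | tensor a b cc =>
      have hMne1 : MLLLink.tensor a b cc ≠ MLLLink.par l1 r1 c1 := fun h => by cases h
      have hMne2 : MLLLink.tensor a b cc ≠ MLLLink.par l2 r2 c2 := fun h => by cases h
      have hrepv : RepB Θ l1 r1 c1 l2 r2 c2 (mainN (MLLLink.tensor a b cc)) cc :=
        Or.inl ⟨_, hM, rfl, by simp [MLLLink.concs], hMne1, hMne2⟩
      have hKne1 : K ≠ MLLLink.par l1 r1 c1 := by
        intro hKe
        have hx1 : x = c1 := by rw [hKe] at hxc; simpa [MLLLink.concs] using hxc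
        rw [OutIs_iff] at hout; unfold outOf at hout
        by_cases hA : hasAux Θ K
        · rw [hKe] at hA
          have := premOfPar_isPar hM (hx1 ▸ hxp) (hasAux_par hA)
          simp [MLLLink.IsPar] at this
        · rw [if_neg hA] at hout; rw [hKe] at hout; exact hu1 hout
      have hKne2 : K ≠ MLLLink.par l2 r2 c2 := by
        intro hKe
        have hx1 : x = c2 := by rw [hKe] at hxc; simpa [MLLLink.concs] using hxc
        rw [OutIs_iff] at hout; unfold outOf at hout
        by_cases hA : hasAux Θ K
        · rw [hKe] at hA
          have := premOfPar_isPar hM (hx1 ▸ hxp) (hasAux_par hA)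
          simp [MLLLink.IsPar] at this
        · rw [if_neg hA] at hout; rw [hKe] at hout; exact hu2 hout
      have hrepu : RepB Θ l1 r1 c1 l2 r2 c2 u x := by
        rw [OutIs_iff] at hout; unfold outOf at hout
        by_cases hA : hasAux Θ K
        · rw [if_pos hA] at hout; exact Or.inr (Or.inl ⟨K, hA, hout, hxc, hKne1, hKne2⟩)
        · rw [if_neg hA] at hout; exact Or.inl ⟨K, hK, hout, hxc, hKne1, hKne2⟩
      refine ⟨x, cc, hrepu, hrepv, ?_⟩
      have hxne1 : x ≠ c1 := fun h => hKne1 (conc_c1 hL1 hK (h ▸ hxc))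
      have hxne2 : x ≠ c2 := fun h => hKne2 (conc_c1 hL2 hK (h ▸ hxc))
      have hccne1 : cc ≠ c1 := fun h =>
        hMne1 (conc_c1 hL1 hM (by rw [← h]; simp [MLLLink.concs]))
      have hccne2 : cc ≠ c2 := fun h =>
        hMne2 (conc_c1 hL2 hM (by rw [← h]; simp [MLLLink.concs]))
      have hadj : (DRGraphL Θ).Adj x cc := by
        rcases (by simpa [MLLLink.prems] using hxp : x = a ∨ x = b) with rfl | rfl
        · exact drAdj_tensor_left hM
        · exact drAdj_tensor_right hM
      exact DRR_single hadj hxne1 hxne2 hccne1 hccne2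
  · -- par-above edge
    have hPne1 : MLLLink.par l r cp ≠ MLLLink.par l1 r1 c1 := fun h => hv1 (congrArg mainN h)
    have hPne2 : MLLLink.par l r cp ≠ MLLLink.par l2 r2 c2 := fun h => hv2 (congrArg mainN h)
    have hrepv : RepB Θ l1 r1 c1 l2 r2 c2 (mainN (MLLLink.par l r cp)) cp :=
      Or.inl ⟨_, hP, rfl, by simp [MLLLink.concs], hPne1, hPne2⟩
    rw [OutIs_iff] at hout; unfold outOf at hout
    by_cases hA : hasAux Θ K
    · rw [if_pos hA] at hout
      by_cases hK1 : K = MLLLink.par l1 r1 c1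
      · subst hK1
        have hl1 : l = c1 := by simpa [MLLLink.concs] using hl
        subst hl1
        exact ⟨cp, cp, Or.inr (Or.inr (Or.inl ⟨hA, hout, r, cp, hP, rfl⟩)), hrepv,
          Relation.ReflTransGen.refl⟩
      · by_cases hK2 : K = MLLLink.par l2 r2 c2
        · subst hK2
          have hl1 : l = c2 := by simpa [MLLLink.concs] using hl
          subst hl1
          exact ⟨cp, cp, Or.inr (Or.inr (Or.inr ⟨hA, hout, r, cp, hP, rfl⟩)), hrepv,
            Relation.ReflTransGen.refl⟩
        · refine ⟨l, cp, Or.inr (Or.inl ⟨K, hA, hout, hl, hK1, hK2⟩), hrepv, ?_⟩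
          have hlne1 : l ≠ c1 := fun h => hK1 (conc_c1 hL1 hK (h ▸ hl))
          have hlne2 : l ≠ c2 := fun h => hK2 (conc_c1 hL2 hK (h ▸ hl))
          have hcpne1 : cp ≠ c1 := fun h =>
            hPne1 (conc_c1 hL1 hP (by rw [← h]; simp [MLLLink.concs]))
          have hcpne2 : cp ≠ c2 := fun h =>
            hPne2 (conc_c1 hL2 hP (by rw [← h]; simp [MLLLink.concs]))
          exact DRR_single (drAdj_par hP) hlne1 hlne2 hcpne1 hcpne2
    · rw [if_neg hA] at hout
      have hK1 : K ≠ MLLLink.par l1 r1 c1 := fun h => hu1 (hout.trans (congrArg mainN h))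
      have hK2 : K ≠ MLLLink.par l2 r2 c2 := fun h => hu2 (hout.trans (congrArg mainN h))
      refine ⟨l, cp, Or.inl ⟨K, hK, hout, hl, hK1, hK2⟩, hrepv, ?_⟩
      have hlne1 : l ≠ c1 := fun h => hK1 (conc_c1 hL1 hK (h ▸ hl))
      have hlne2 : l ≠ c2 := fun h => hK2 (conc_c1 hL2 hK (h ▸ hl))
      have hcpne1 : cp ≠ c1 := fun h =>
        hPne1 (conc_c1 hL1 hP (by rw [← h]; simp [MLLLink.concs]))
      have hcpne2 : cp ≠ c2 := fun h =>
        hPne2 (conc_c1 hL2 hP (by rw [← h]; simp [MLLLink.concs]))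
      exact DRR_single (drAdj_par hP) hlne1 hlne2 hcpne1 hcpne2
  · -- main-aux edge
    obtain ⟨a, b, cc, rfl⟩ := hasAux_shape hA
    have hne1 : MLLLink.par a b cc ≠ MLLLink.par l1 r1 c1 := fun h => hu1 (congrArg mainN h)
    have hne2 : MLLLink.par a b cc ≠ MLLLink.par l2 r2 c2 := fun h => hu2 (congrArg mainN h)
    exact ⟨cc, cc, Or.inl ⟨_, hA.1, rfl, by simp [MLLLink.concs], hne1, hne2⟩,
      Or.inr (Or.inl ⟨_, hA, rfl, by simp [MLLLink.concs], hne1, hne2⟩),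
      Relation.ReflTransGen.refl⟩

end Fixed

end SigmaDev

noncomputable section TermDev
open Classical

def parLinksF (Θ : ProofStructure) : Finset MLLLink := Θ.links.filter fun L => L.IsPar

def measureC (Θ : ProofStructure) (c : Config) : ℕ :=
  c.tree.V.card + ((parLinksF Θ).card - (c.jumped ∩ parLinksF Θ).card)

lemma step_measure {Θ : ProofStructure} {r : RRule} {c c' : Config} (hI : InvC Θ c)
    (hs : Step r c c') : measureC Θ c' < measureC Θ c := by
  cases hs with
  | elim c v L s hact hv hks hkv hup hedge hl hr =>
      have h1 : (c.tree.V.erase v).card < c.tree.V.card := Finset.card_erase_lt_of_mem hv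
      show (c.tree.V.erase v).card + ((parLinksF Θ).card - (c.jumped ∩ parLinksF Θ).card)
          < c.tree.V.card + ((parLinksF Θ).card - (c.jumped ∩ parLinksF Θ).card)
      omega
  | union c n' s s' hact hn' hne hks hkn hedge =>
      have h1 : (c.tree.V.erase n').card < c.tree.V.card := Finset.card_erase_lt_of_mem hn'
      show (c.tree.V.erase n').card + ((parLinksF Θ).card - (c.jumped ∩ parLinksF Θ).card)
          < c.tree.V.card + ((parLinksF Θ).card - (c.jumped ∩ parLinksF Θ).card)
      omega
  | jump c v m L s s' hact hv hm hks hkv hedge hup hkm hr hLj =>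
      have hLP : L ∈ parLinksF Θ := by
        obtain ⟨_, hL, hP⟩ := hI.2.1 v hv L hkv
        exact Finset.mem_filter.2 ⟨hL, hP⟩
      have hnotin : L ∉ c.jumped ∩ parLinksF Θ := fun h => hLj (Finset.mem_inter.1 h).1
      have hins : (insert L c.jumped ∩ parLinksF Θ) = insert L (c.jumped ∩ parLinksF Θ) :=
        Finset.insert_inter_of_mem hLP
      have hcard : (insert L c.jumped ∩ parLinksF Θ).card = (c.jumped ∩ parLinksF Θ).card + 1 := by
        rw [hins, Finset.card_insert_of_notMem hnotin]
      have hlt : (c.jumped ∩ parLinksF Θ).card < (parLinksF Θ).card :=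
        Finset.card_lt_card
          ((Finset.ssubset_iff_of_subset Finset.inter_subset_right).2 ⟨L, hLP, hnotin⟩)
      show c.tree.V.card + ((parLinksF Θ).card - (insert L c.jumped ∩ parLinksF Θ).card)
          < c.tree.V.card + ((parLinksF Θ).card - (c.jumped ∩ parLinksF Θ).card)
      omega

lemma rtg_InvC {Θ : ProofStructure} {c c' : Config} (hI : InvC Θ c)
    (h : Relation.ReflTransGen StepAny c c') : InvC Θ c' := by
  induction h with
  | refl => exact hI
  | tail _ hstep ih => obtain ⟨r, hr⟩ := hstep; exact step_Inv ih hr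

lemma reach_stuck (Θ : ProofStructure) :
    ∀ n c, measureC Θ c ≤ n → InvC Θ c →
      ∃ c', Relation.ReflTransGen StepAny c c' ∧ Stuck c' ∧ InvC Θ c' := by
  intro n
  induction n with
  | zero =>
      intro c hm hI
      by_cases hst : Stuck c
      · exact ⟨c, .refl, hst, hI⟩
      · exfalso
        unfold Stuck at hst
        push_neg at hst
        obtain ⟨r, c1, hs⟩ := hst
        have := step_measure hI hs
        omega
  | succ n ih =>
      intro c hm hI
      by_cases hst : Stuck c
      · exact ⟨c, .refl, hst, hI⟩
      · unfold Stuck at hst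
        push_neg at hst
        obtain ⟨r, c1, hs⟩ := hst
        have hlt := step_measure hI hs
        obtain ⟨c', h1, h2, h3⟩ := ih c1 (by omega) (step_Inv hI hs)
        exact ⟨c', Relation.ReflTransGen.head ⟨r, hs⟩ h1, h2, h3⟩

lemma drr_walk {Θ : ProofStructure} {c1 c2 o o' : Occ} (h : DRR Θ c1 c2 o o') :
    o ≠ c1 → o ≠ c2 →
    ∃ q : (DRGraphL Θ).Walk o o', ∀ z ∈ q.support, z ≠ c1 ∧ z ≠ c2 := by
  induction h using Relation.ReflTransGen.head_induction_on with
  | refl =>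
      intro h1 h2
      refine ⟨.nil, fun z hz => ?_⟩
      rw [SimpleGraph.Walk.support_nil, List.mem_singleton] at hz
      subst hz; exact ⟨h1, h2⟩
  | head hstep htail ih =>
      intro h1 h2
      obtain ⟨hadj, _, _, hb1, hb2⟩ := hstep
      obtain ⟨q, hq⟩ := ih hb1 hb2
      refine ⟨.cons hadj q, fun z hz => ?_⟩
      rw [SimpleGraph.Walk.support_cons] at hz
      rcases List.mem_cons.1 hz with rfl | hz'
      · exact ⟨h1, h2⟩
      · exact hq z hz'

lemma initial_Blocked (Θ : ProofStructure) (htd : TransDefined Θ) {L1 L2 : MLLLink}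
    (h12 : deNMRel Θ L1 L2) : Blocked (TT Θ) L1 L2 := by
  obtain ⟨h1l, h2l, hne12, l1, r1, c1, rfl, l2, r2, c2, rfl, p, hp, hcp⟩ := h12
  have htree := htd.1
  refine ⟨mem_VF.2 (Or.inl ⟨_, h1l, rfl⟩), mem_VF.2 (Or.inl ⟨_, h2l, rfl⟩),
    kindF_main_par trivial, kindF_main_par trivial, ?_⟩
  intro u hu w hw s hkw hrs har
  have hpf1 := par_facts h1l
  have hpf2 := par_facts h2l
  -- identify u
  have hexKl : ∃ K ∈ Θ.links, l2 ∈ MLLLink.concs K := by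
    obtain ⟨K, hK, _, hc⟩ := Θ.premIsConc _ h2l l2 (by simp [MLLLink.prems])
    exact ⟨K, hK, hc⟩
  have hucomp : u = outOf Θ hexKl.choose := by
    have hu' : upperF Θ (mainN (MLLLink.par l2 r2 c2)) = some u := hu
    unfold upperF at hu'
    rw [mainN_div, decL_codeL, if_pos (mainN_mod _)] at hu'
    have hu'' : (if h : ∃ K ∈ Θ.links, l2 ∈ MLLLink.concs K then some (outOf Θ h.choose)
        else none) = some u := hu'
    rw [dif_pos hexKl] at hu''
    exact (Option.some.inj hu'').symm
  have hKl_mem : hexKl.choose ∈ Θ.links := hexKl.choose_spec.1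
  have hKl_conc : l2 ∈ MLLLink.concs hexKl.choose := hexKl.choose_spec.2
  set Kl := hexKl.choose with hKldef
  have huo : u = outOf Θ Kl := hucomp
  -- identify w
  have hwdat : ∃ Kr, Kr ∈ Θ.links ∧ r2 ∈ MLLLink.concs Kr ∧
      ((w = mainN Kr ∧ ¬ Kr.IsPar) ∨ (w = auxN Kr ∧ hasAux Θ Kr)) := by
    have getr2 : ∀ K : MLLLink, s = sFor Θ K → r2 ∈ MLLLink.concs K := by
      intro K hss
      have hll : linkLabel Θ K (DLabel.right (MLLLink.par l2 r2 c2)) :=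
        mem_sFor.1 (by rw [← hss]; exact hrs)
      obtain ⟨x, hxc, hlab⟩ := hll
      rcases hlab with ⟨P, hPl, hd⟩ | ⟨P, hPr, hd⟩
      · simp at hd
      · have hPL2 : MLLLink.par l2 r2 c2 = P := by cases hd; rfl
        obtain ⟨hPmem, l', c', hPeq⟩ := hPr
        rw [← hPL2] at hPeq
        injection hPeq with e1 e2 e3
        rwa [e2]
    rcases mem_VF.1 hw with ⟨K, hK, rfl⟩ | ⟨K, hA, rfl⟩
    · by_cases hpK : K.IsPar
      · have hkk : kindF Θ (mainN K) = DNodeKind.par K := kindF_main_par hpK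
        have hkw' : kindF Θ (mainN K) = DNodeKind.labeled s := hkw
        exact absurd (hkk.symm.trans hkw') (fun hh => kind_clash hh.symm)
      · have hkk : kindF Θ (mainN K) = DNodeKind.labeled (sFor Θ K) := kindF_main_nonpar hpK
        have hkw' : kindF Θ (mainN K) = DNodeKind.labeled s := hkw
        have hss : s = sFor Θ K := by
          have := hkk.symm.trans hkw'; injection this with h; exact h.symm
        exact ⟨K, hK, getr2 K hss, Or.inl ⟨rfl, hpK⟩⟩
    · have hkk : kindF Θ (auxN K) = DNodeKind.labeled (sFor Θ K) := kindF_aux K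
      have hkw' : kindF Θ (auxN K) = DNodeKind.labeled s := hkw
      have hss : s = sFor Θ K := by
        have := hkk.symm.trans hkw'; injection this with h; exact h.symm
      exact ⟨K, hA.1, getr2 K hss, Or.inr ⟨rfl, hA⟩⟩
  obtain ⟨Kr, hKr_mem, hKr_conc, hwshape⟩ := hwdat
  by_cases hr2c1 : r2 = c1
  · -- degenerate case : c1 = r2 is the right premise of L2
    have hKrL1 : Kr = MLLLink.par l1 r1 c1 := conc_c1 h1l hKr_mem (hr2c1 ▸ hKr_conc)
    have hwa : w = auxN (MLLLink.par l1 r1 c1) := by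
      rcases hwshape with ⟨rfl, hnp⟩ | ⟨rfl, _⟩
      · exact absurd (by rw [hKrL1]; trivial) hnp
      · rw [hKrL1]
    have hc1prem : c1 ∈ MLLLink.prems (MLLLink.par l2 r2 c2) := by
      rw [← hr2c1]; simp [MLLLink.prems]
    have honly : ∀ z, (TT Θ).graph.Adj z (auxN (MLLLink.par l1 r1 c1)) →
        z = mainN (MLLLink.par l1 r1 c1) := by
      intro z hadj
      rcases TT_adj_ES hadj with hes | hes
      · rcases hes with ⟨x, K, M, _, _, _, _, _, _, hveq⟩ |
          ⟨K, l, r, cp, _, _, _, _, hveq⟩ | ⟨L, hA, rfl, hveq⟩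
        · exact absurd hveq.symm (mainN_ne_auxN M _)
        · exact absurd hveq.symm (mainN_ne_auxN _ _)
        · have := auxN_inj hveq
          rw [← this]
      · exfalso
        rcases hes with ⟨x, K, M, hK, hM, hxc, hxp, hMnp, hout, rfl⟩ |
          ⟨K, l, r, cp, hK, hP, hl, hout, rfl⟩ | ⟨L, hA, huq, hveq⟩
        · rw [OutIs_iff] at hout; unfold outOf at hout
          by_cases hA : hasAux Θ K
          · rw [if_pos hA] at hout
            have hKeq := (auxN_inj hout).symm
            rw [hKeq] at hxc
            have hxcc : x = c1 := by simpa [MLLLink.concs] using hxc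
            have hML2 : M = MLLLink.par l2 r2 c2 :=
              Θ.premUnique M hM _ h2l x hxp (by rw [hxcc]; exact hc1prem)
            rw [hML2] at hMnp; exact hMnp trivial
          · rw [if_neg hA] at hout; exact mainN_ne_auxN K _ hout.symm
        · rw [OutIs_iff] at hout; unfold outOf at hout
          by_cases hA : hasAux Θ K
          · rw [if_pos hA] at hout
            have hKeq := (auxN_inj hout).symm
            rw [hKeq] at hl
            have hlc : l = c1 := by simpa [MLLLink.concs] using hl
            have hPeq : MLLLink.par l r cp = MLLLink.par l2 r2 c2 :=
              Θ.premUnique _ hP _ h2l l (by simp [MLLLink.prems])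
                (by rw [hlc]; exact hc1prem)
            injection hPeq with e1 e2 e3
            exact hpf2.1 (e1.symm.trans (hlc.trans hr2c1.symm))
          · rw [if_neg hA] at hout; exact mainN_ne_auxN K _ hout.symm
        · exact mainN_ne_auxN L _ huq.symm
    rw [hwa] at har
    rcases har.cases_tail with heq | ⟨z, hz, hstep⟩
    · have huaux : u = auxN (MLLLink.par l1 r1 c1) := heq.symm
      rw [huo] at huaux; unfold outOf at huaux
      by_cases hA : hasAux Θ Kl
      · rw [if_pos hA] at huaux
        have hKleq := auxN_inj huaux
        rw [hKleq] at hKl_conc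
        have : l2 = c1 := by simpa [MLLLink.concs] using hKl_conc
        exact hpf2.1 (this.trans hr2c1.symm)
      · rw [if_neg hA] at huaux; exact mainN_ne_auxN Kl _ huaux
    · obtain ⟨hadj, hz1, _, _, _⟩ := hstep
      exact hz1 (honly z hadj)
  · -- main case
    have hσ : ∀ x y : ℕ, AR2 (TT Θ).graph (mainN (MLLLink.par l1 r1 c1))
        (mainN (MLLLink.par l2 r2 c2)) x y →
        ((∃ o, RepB Θ l1 r1 c1 l2 r2 c2 x o ∧ DRR Θ c1 c2 o r2) ↔
         (∃ o, RepB Θ l1 r1 c1 l2 r2 c2 y o ∧ DRR Θ c1 c2 o r2)) := by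
      intro x y h
      induction h with
      | refl => exact Iff.rfl
      | @tail vb vc hxz hstep ih =>
          obtain ⟨hadj, hb1, hb2, hc1', hc2'⟩ := hstep
          refine ih.trans ?_
          have hpair : ∃ o o', RepB Θ l1 r1 c1 l2 r2 c2 vb o ∧
              RepB Θ l1 r1 c1 l2 r2 c2 vc o' ∧ DRR Θ c1 c2 o o' := by
            rcases TT_adj_ES hadj with hes | hes
            · exact esRep h1l h2l hb1 hb2 hc1' hc2' hes
            · obtain ⟨o, o', ho, ho', hd⟩ := esRep h1l h2l hc1' hc2' hb1 hb2 hes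
              exact ⟨o', o, ho', ho, DRR_symm hd⟩
          obtain ⟨o0, o1, hr0, hr1, hd01⟩ := hpair
          constructor
          · rintro ⟨o, hro, hdo⟩
            exact ⟨o1, hr1, (DRR_symm hd01).trans
              ((repConn h1l h2l hne12 hr0 hro).trans hdo)⟩
          · rintro ⟨o, hro, hdo⟩
            exact ⟨o0, hr0, hd01.trans ((repConn h1l h2l hne12 hr1 hro).trans hdo)⟩
    have hσw : ∃ o, RepB Θ l1 r1 c1 l2 r2 c2 w o ∧ DRR Θ c1 c2 o r2 := by
      refine ⟨r2, ?_, Relation.ReflTransGen.refl⟩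
      rcases hwshape with ⟨rfl, hnp⟩ | ⟨rfl, hA⟩
      · refine Or.inl ⟨Kr, hKr_mem, rfl, hKr_conc, ?_, ?_⟩
        · intro h; rw [h] at hnp; exact hnp trivial
        · intro h; rw [h] at hnp; exact hnp trivial
      · refine Or.inr (Or.inl ⟨Kr, hA, rfl, hKr_conc, ?_, ?_⟩)
        · intro h; rw [h] at hKr_conc
          exact hr2c1 (by simpa [MLLLink.concs] using hKr_conc)
        · intro h; rw [h] at hKr_conc
          exact hpf2.2.2 (by simpa [MLLLink.concs] using hKr_conc)
    have hσu : ¬ ∃ o, RepB Θ l1 r1 c1 l2 r2 c2 u o ∧ DRR Θ c1 c2 o r2 := by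
      rintro ⟨o, hro, hdo⟩
      by_cases hKl1 : Kl = MLLLink.par l1 r1 c1
      · have hl2c1 : l2 = c1 := by
          rw [hKl1] at hKl_conc; simpa [MLLLink.concs] using hKl_conc
        have hAL1 : hasAux Θ (MLLLink.par l1 r1 c1) :=
          ⟨h1l, l1, r1, c1, rfl,
            ⟨MLLLink.par l2 r2 c2, Or.inl ⟨h2l, r2, c2, by rw [hl2c1]⟩⟩⟩
        have huaux : u = auxN (MLLLink.par l1 r1 c1) := by
          rw [huo, hKl1]; unfold outOf; rw [if_pos hAL1]
        rcases repNorm hro with ⟨K, hK, hdK, hoK, hK1, hK2⟩ |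
            ⟨hdK, rr, cp2, hPmem, hoe⟩ | ⟨hdK, rr, cp2, hPmem, hoe⟩
        · rw [huaux, auxN_div, decL_codeL] at hdK; exact hK1 hdK.symm
        · have hPeq : MLLLink.par c1 rr cp2 = MLLLink.par l2 r2 c2 :=
            Θ.premUnique _ hPmem _ h2l c1 (by simp [MLLLink.prems])
              (by rw [← hl2c1]; simp [MLLLink.prems])
          injection hPeq with e1 e2 e3
          rw [hoe, e3] at hdo
          exact hpf2.2.2 (DRR_c_start hdo (Or.inr rfl))
        · rw [huaux, auxN_div, decL_codeL] at hdK; exact hne12 hdK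
      · by_cases hKl2 : Kl = MLLLink.par l2 r2 c2
        · rw [hKl2] at hKl_conc
          exact hpf2.2.1 (by simpa [MLLLink.concs] using hKl_conc)
        · have hrepl2 : RepB Θ l1 r1 c1 l2 r2 c2 u l2 := by
            rw [huo]; unfold outOf
            by_cases hA : hasAux Θ Kl
            · rw [if_pos hA]; exact Or.inr (Or.inl ⟨Kl, hA, rfl, hKl_conc, hKl1, hKl2⟩)
            · rw [if_neg hA]; exact Or.inl ⟨Kl, hKl_mem, rfl, hKl_conc, hKl1, hKl2⟩
          have hdl2 : DRR Θ c1 c2 l2 r2 :=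
            (repConn h1l h2l hne12 hrepl2 hro).trans hdo
          have hl2ne1 : l2 ≠ c1 := fun h => hKl1 (conc_c1 h1l hKl_mem (h ▸ hKl_conc))
          have hl2ne2 : l2 ≠ c2 := fun h => hKl2 (conc_c1 h2l hKl_mem (h ▸ hKl_conc))
          obtain ⟨q, hq⟩ := drr_walk hdl2 hl2ne1 hl2ne2
          exact no_avoid Θ htree (prem_mem_occ h2l (by simp [MLLLink.prems]))
            (prem_mem_occ h2l (by simp [MLLLink.prems]))
            (conc_mem_occ h1l (by simp [MLLLink.concs]))
            p hp hcp q (fun hmem => (hq c1 hmem).1 rfl)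
    exact hσu ((hσ u w har).2 hσw)


lemma initial_InvC (Θ : ProofStructure) (htd : TransDefined Θ) (n : ℕ) :
    InvC Θ { tree := TT Θ, active := n, jumped := ∅ } := by
  refine ⟨?_, ?_, ?_⟩
  · intro e he
    obtain ⟨u, v, rfl, h⟩ := mem_edgesF.1 he
    rcases h with h | h
    · exact fun hd => ES_ne h (Sym2.mk_isDiag_iff.1 hd)
    · exact fun hd => ES_ne h (Sym2.mk_isDiag_iff.1 hd).symm
  · intro v hv L hkv
    rcases mem_VF.1 hv with ⟨K, hK, rfl⟩ | ⟨K, hA, rfl⟩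
    · have hkv' : kindF Θ (mainN K) = DNodeKind.par L := hkv
      by_cases hp : K.IsPar
      · rw [kindF_main_par hp] at hkv'
        have hKL : K = L := by injection hkv'
        exact ⟨by rw [hKL], hKL ▸ hK, hKL ▸ hp⟩
      · rw [kindF_main_nonpar hp] at hkv'
        exact absurd hkv' kind_clash
    · have hkv' : kindF Θ (auxN K) = DNodeKind.par L := hkv
      rw [kindF_aux] at hkv'
      exact absurd hkv' kind_clash
  · intro L1 L2 _ _ hR
    exact initial_Blocked Θ htd hR

end TermDev

/-- If Algorithm A with input Θ outputs yes, then the directed graph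
G(S_∀ℓ(Θ)) is acyclic. -/
theorem algorithm_A_yes_implies_directed_acyclic (Θ : ProofStructure)
    (hyes : AlgAYes Θ) :
    DirAcyclicRel (deNMRel Θ) := by
  intro x hx
  have htd := hyes.1
  obtain ⟨y, hy, hR⟩ := Relation.TransGen.tail'_iff.1 hx
  obtain ⟨hyl, hxl, hnexy, ly, ry, cy, hyeq, lx, rx, cx, hxeq, p, hp, hc⟩ := hR
  have hR' : deNMRel Θ y x :=
    ⟨hyl, hxl, hnexy, ly, ry, cy, hyeq, lx, rx, cx, hxeq, p, hp, hc⟩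
  have hrprem : rx ∈ MLLLink.prems x := by rw [hxeq]; simp [MLLLink.prems]
  obtain ⟨Kr, hKr, hKne, hrc⟩ := Θ.premIsConc x hxl rx hrprem
  have hstart : ∃ n, (TT Θ).IsLabeledVertex n := by
    by_cases hKp : Kr.IsPar
    · have hAux : hasAux Θ Kr := by
        cases Kr with
        | par a b cc =>
            refine ⟨hKr, a, b, cc, rfl, ?_⟩
            have hrx : rx = cc := by simpa [MLLLink.concs] using hrc
            rw [← hrx]
            exact ⟨x, Or.inr ⟨hxl, lx, cx, hxeq⟩⟩
        | id a b => exact absurd hKp (by simp [MLLLink.IsPar])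
        | tensor a b cc => exact absurd hKp (by simp [MLLLink.IsPar])
      exact ⟨auxN Kr, mem_VF.2 (Or.inr ⟨Kr, hAux, rfl⟩), sFor Θ Kr, kindF_aux Kr⟩
    · exact ⟨mainN Kr, mem_VF.2 (Or.inl ⟨Kr, hKr, rfl⟩), sFor Θ Kr, kindF_main_nonpar hKp⟩
  obtain ⟨n, hn⟩ := hstart
  have hI0 := initial_InvC Θ htd n
  obtain ⟨c', hrtg, hstuck, hI'⟩ :=
    reach_stuck Θ (measureC Θ { tree := TT Θ, active := n, jumped := ∅ }) _ le_rfl hI0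
  have hfin := hyes.2 (TT Θ) (isTranslation_TT htd) n hn c' hrtg hstuck
  have hcycx : Cyc Θ x := hx
  have hcycy : Cyc Θ y := Relation.TransGen.trans_left (.single hR') hy
  obtain ⟨hm1, hm2, hk1, hk2, _⟩ := hI'.2.2 y x hcycy hcycx hR'
  obtain ⟨hV, hE, s, hks, hSf⟩ := hfin
  rw [hV, Finset.mem_singleton] at hm2
  rw [hm2, hks] at hk2
  exact kind_clash hk2
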